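/- Let k, k₁, k₂, a₀, a₁, b₁ ∈ ℝ with k ≠ 0. Then u(x,t) = k₁ + k₂ e^{k((-k k₁ a₁ + a₀ k + b₁)t - x)} is an exact solution of the classical PDE: for all x ∈ ℝ and t > 0, ∂u/∂t = a₁ (∂u/∂x)² + (a₁ u + a₀) ∂²u/∂x² + (2k a₁ u - b₁) ∂u/∂x. -/

import Mathlib

/-- The exact solution `u(x,t) = k₁ + k₂ e^{k((-k k₁ a₁ + a₀ k + b₁)t - x)}`. -/
noncomputable def uSol (k k₁ k₂ a₀ a₁ b₁ : ℝ) (x t : ℝ) : ℝ :=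
  k₁ + k₂ * Real.exp (k * ((-k * k₁ * a₁ + a₀ * k + b₁) * t - x))

lemma uSol_hasDerivAt_x (k k₁ k₂ a₀ a₁ b₁ t x : ℝ) :
    HasDerivAt (fun y => uSol k k₁ k₂ a₀ a₁ b₁ y t)
      (-k * (k₂ * Real.exp (k * ((-k * k₁ * a₁ + a₀ * k + b₁) * t - x)))) x := by
  unfold uSol
  have h : HasDerivAt (fun y : ℝ => k * ((-k * k₁ * a₁ + a₀ * k + b₁) * t - y)) (-k) x := by
    have := ((hasDerivAt_const x ((-k * k₁ * a₁ + a₀ * k + b₁) * t)).sub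
      (hasDerivAt_id x)).const_mul k
    simpa using this
  have := (h.exp.const_mul k₂).const_add k₁
  convert this using 1
  exacts [rfl, rfl, by ring]

lemma uSol_derivX (k k₁ k₂ a₀ a₁ b₁ t : ℝ) :
    (deriv (fun y => uSol k k₁ k₂ a₀ a₁ b₁ y t)) = fun x =>
      -k * (k₂ * Real.exp (k * ((-k * k₁ * a₁ + a₀ * k + b₁) * t - x))) := by
  funext x
  exact (uSol_hasDerivAt_x k k₁ k₂ a₀ a₁ b₁ t x).deriv

/-- **Exact solution of a classical nonlinear diffusion–convection equation.**
For `k ≠ 0`, `u(x,t) = k₁ + k₂ e^{k((-k k₁ a₁ + a₀ k + b₁)t - x)}` satisfies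
`∂u/∂t = a₁ (∂u/∂x)² + (a₁ u + a₀) ∂²u/∂x² + (2k a₁ u - b₁) ∂u/∂x` for all `x`, `t > 0`. -/
theorem classical_diffusion_convection_exact (k k₁ k₂ a₀ a₁ b₁ : ℝ) (hk : k ≠ 0) :
    ∀ x : ℝ, ∀ t : ℝ, 0 < t →
      deriv (fun s => uSol k k₁ k₂ a₀ a₁ b₁ x s) t =
        a₁ * (deriv (fun y => uSol k k₁ k₂ a₀ a₁ b₁ y t) x) ^ 2
          + (a₁ * uSol k k₁ k₂ a₀ a₁ b₁ x t + a₀) *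
            deriv (fun y => deriv (fun y' => uSol k k₁ k₂ a₀ a₁ b₁ y' t) y) x
          + (2 * k * a₁ * uSol k k₁ k₂ a₀ a₁ b₁ x t - b₁) *
            deriv (fun y => uSol k k₁ k₂ a₀ a₁ b₁ y t) x := by
  intro x t ht
  set C := -k * k₁ * a₁ + a₀ * k + b₁ with hC
  have hdt : deriv (fun s => uSol k k₁ k₂ a₀ a₁ b₁ x s) t =
      k₂ * (k * C) * Real.exp (k * (C * t - x)) := by
    have h : HasDerivAt (fun s : ℝ => k * (C * s - x)) (k * C) t := by
      have := (((hasDerivAt_id t).const_mul C).sub (hasDerivAt_const t x)).const_mul k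
      simpa using this
    have := (h.exp.const_mul k₂).const_add k₁
    have h2 : HasDerivAt (fun s => uSol k k₁ k₂ a₀ a₁ b₁ x s)
        (k₂ * (Real.exp (k * (C * t - x)) * (k * C))) t := this
    rw [h2.deriv]; ring
  have hdxx : deriv (fun y => deriv (fun y' => uSol k k₁ k₂ a₀ a₁ b₁ y' t) y) x =
      k * k * (k₂ * Real.exp (k * (C * t - x))) := by
    rw [uSol_derivX]
    have h : HasDerivAt (fun y : ℝ => k * (C * t - y)) (-k) x := by
      have := ((hasDerivAt_const x (C * t)).sub (hasDerivAt_id x)).const_mul k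
      simpa using this
    have := ((h.exp.const_mul k₂).const_mul (-k)).deriv
    rw [this]; ring
  rw [hdt, hdxx, uSol_derivX]
  unfold uSol
  rw [← hC]
  ring
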